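/- Let f be the chain-type polynomial with exponents p_1,…,p_n ≥ 1, canonical weights w_j = p_1⋯p_{j−1}⟨p_{j+1},…,p_n⟩, degree d = p_1⋯p_n, and c = gcd(w_1,…,w_n). Then the congruence system E·m ≡ (1,…,1)^T mod c, where E is the chain exponent matrix, has exactly c solutions m ∈ (ℤ/c)^n, given explicitly by m_1 = m arbitrary, and m_j ≡ (−1)^j⟨p_2,…,p_{j−1}⟩ + (−1)^{j−1} m·p_1⋯p_{j−1} mod c for j ≥ 2. -/

import Mathlib

/-- `⟨q_1,…,q_k⟩ := ∑_{j=1}^{k} (−1)^{j−1} q_j ⋯ q_k + (−1)^k`, `⟨⟩ = 1`. -/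
def bracket (l : List ℤ) : ℤ :=
  (∑ j ∈ Finset.range l.length, (-1) ^ j * (l.drop j).prod) + (-1) ^ l.length

/-- The exponent matrix of the chain polynomial. -/
def chainE {n : ℕ} (p : Fin n → ℤ) : Matrix (Fin n) (Fin n) ℤ :=
  Matrix.of fun i j => if j = i then p i else if (j : ℕ) = (i : ℕ) + 1 then 1 else 0

/-- The explicit solution of the congruence system for the chain polynomial:
`m_1 = a` arbitrary and, for `j ≥ 2` (here `j : Fin n` is 0-based, so paper index
`j+1`), `m_j ≡ (−1)^j ⟨p_2,…,p_{j−1}⟩ + (−1)^{j−1}·a·p_1⋯p_{j−1} mod c`. -/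
noncomputable def chainSol {n : ℕ} (p : Fin n → ℤ) (c : ℕ) (a : ZMod c) :
    Fin n → ZMod c := fun j =>
  if (j : ℕ) = 0 then a
  else ((-1 : ZMod c) ^ ((j : ℕ) + 1)) *
        ((bracket (((List.ofFn p).drop 1).take ((j : ℕ) - 1)) : ℤ) : ZMod c)
      + ((-1 : ZMod c) ^ (j : ℕ)) * a *
        ((((List.ofFn p).take (j : ℕ)).prod : ℤ) : ZMod c)

lemma bracket_nil : bracket [] = 1 := by simp [bracket]

lemma bracket_concat (l : List ℤ) (q : ℤ) :
    bracket (l ++ [q]) = q * bracket l + (-1) ^ (l.length + 1) := by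
  unfold bracket
  rw [List.length_append]
  simp only [List.length_singleton]
  rw [Finset.sum_range_succ]
  have h1 : ∀ j ∈ Finset.range l.length, (-1:ℤ)^j * ((l ++ [q]).drop j).prod
      = ((-1:ℤ)^j * (l.drop j).prod) * q := by
    intro j hj
    rw [List.drop_append_of_le_length (Finset.mem_range.mp hj).le]
    simp [mul_assoc]
  rw [Finset.sum_congr rfl h1, ← Finset.sum_mul]
  have h2 : ((l ++ [q]).drop l.length) = [q] := by
    rw [List.drop_append_of_le_length le_rfl, List.drop_length]; rfl
  rw [h2]
  simp only [List.prod_singleton]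
  ring

lemma tail_take_succ {n : ℕ} (p : Fin n → ℤ) (k : ℕ) (hk : k + 1 < n) :
    ((List.ofFn p).drop 1).take (k+1) = ((List.ofFn p).drop 1).take k ++ [p ⟨k+1, hk⟩] := by
  rw [List.take_succ]
  congr 1
  have hlen : k < ((List.ofFn p).drop 1).length := by simp; omega
  rw [List.getElem?_eq_getElem hlen]
  simp [List.getElem_drop, List.getElem_ofFn]

lemma take_prod_succ {n : ℕ} (p : Fin n → ℤ) (k : ℕ) (hk : k < n) :
    ((List.ofFn p).take (k+1)).prod = ((List.ofFn p).take k).prod * p ⟨k, hk⟩ := by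
  rw [List.take_succ]
  have hlen : k < (List.ofFn p).length := by simpa using hk
  rw [List.getElem?_eq_getElem hlen]
  simp [List.getElem_ofFn]

lemma tail_take_length {n : ℕ} (p : Fin n → ℤ) (k : ℕ) (hk : k + 1 ≤ n) :
    (((List.ofFn p).drop 1).take k).length = k := by
  simp; omega

lemma chainE_mulVec {n : ℕ} (p : Fin n → ℤ) (c : ℕ) (m : Fin n → ZMod c) (i : Fin n) :
    ((chainE p).map (Int.cast : ℤ → ZMod c)).mulVec m i
      = (p i : ZMod c) * m i + (if h : (i:ℕ)+1 < n then m ⟨(i:ℕ)+1, h⟩ else 0) := by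
  simp only [Matrix.mulVec, dotProduct, Matrix.map_apply, chainE, Matrix.of_apply]
  have key : ∀ j : Fin n,
      ((if j = i then p i else if (j:ℕ) = (i:ℕ)+1 then 1 else 0 : ℤ) : ZMod c) * m j
      = (if j = i then (p i : ZMod c) * m j else 0)
        + (if (j:ℕ) = (i:ℕ)+1 then m j else 0) := by
    intro j
    by_cases h1 : j = i
    · subst h1
      rw [if_pos rfl, if_pos rfl, if_neg (by omega)]
      ring
    · rw [if_neg h1, if_neg h1]
      by_cases h2 : (j:ℕ) = (i:ℕ)+1
      · rw [if_pos h2, if_pos h2]; simp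
      · rw [if_neg h2, if_neg h2]; simp
  rw [Finset.sum_congr rfl (fun j _ => key j), Finset.sum_add_distrib]
  congr 1
  · rw [Finset.sum_ite_eq' Finset.univ i (fun j => (p i : ZMod c) * m j)]
    simp
  · split_ifs with h
    · rw [Finset.sum_eq_single (⟨(i:ℕ)+1, h⟩ : Fin n)]
      · simp
      · intro b _ hb; rw [if_neg]; intro hcc; exact hb (Fin.ext hcc)
      · simp
    · apply Finset.sum_eq_zero; intro j _; rw [if_neg]; intro hj; exact h (hj ▸ j.isLt)

lemma chainSol_row {n : ℕ} (p : Fin n → ℤ) (c : ℕ) (a : ZMod c) (k : ℕ) (hk : k + 1 < n) :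
    (p ⟨k, by omega⟩ : ZMod c) * chainSol p c a ⟨k, by omega⟩ + chainSol p c a ⟨k+1, hk⟩ = 1 := by
  rcases k with _ | k'
  · simp only [chainSol, Fin.val_mk]
    rw [if_neg (Nat.succ_ne_zero 0)]
    simp only [if_true, Nat.add_sub_cancel, List.take_zero]
    rw [bracket_nil, take_prod_succ p 0 (by omega)]
    simp only [List.take_zero, List.prod_nil]
    push_cast
    ring
  · simp only [chainSol, Fin.val_mk]
    rw [if_neg (Nat.succ_ne_zero _), if_neg (Nat.succ_ne_zero _)]
    simp only [Nat.add_sub_cancel]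
    rw [tail_take_succ p k' (by omega), bracket_concat,
        tail_take_length p k' (by omega),
        take_prod_succ p (k'+1) (by omega)]
    push_cast
    have he : ((-1 : ZMod c))^k' * (-1)^k' = 1 := by
      rw [← pow_add]; exact Even.neg_one_pow ⟨k', rfl⟩
    simp only [pow_succ]
    linear_combination he

lemma chainSol_last_succ {n : ℕ} (p : Fin n → ℤ) (c : ℕ) (a : ZMod c) (k' : ℕ)
    (h : n = k' + 2)
    (hw0 : ((bracket ((List.ofFn p).drop 1) : ℤ) : ZMod c) = 0)
    (hwP : ((((List.ofFn p).take (k'+1)).prod : ℤ) : ZMod c) = 0) :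
    (p ⟨k'+1, by omega⟩ : ZMod c) * chainSol p c a ⟨k'+1, by omega⟩ = 1 := by
  simp only [chainSol, Fin.val_mk]
  rw [if_neg (Nat.succ_ne_zero _)]
  simp only [Nat.add_sub_cancel]
  have htail : ((List.ofFn p).drop 1).take (k'+1) = (List.ofFn p).drop 1 :=
    List.take_of_length_le (by simp; omega)
  have hbc := bracket_concat (((List.ofFn p).drop 1).take k') (p ⟨k'+1, by omega⟩)
  rw [← tail_take_succ p k' (by omega), htail, tail_take_length p k' (by omega)] at hbc
  have hbcC := congrArg (Int.cast : ℤ → ZMod c) hbc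
  push_cast at hbcC
  rw [hw0] at hbcC
  have he : ((-1 : ZMod c))^k' * (-1)^k' = 1 := by
    rw [← pow_add]; exact Even.neg_one_pow ⟨k', rfl⟩
  simp only [pow_succ] at hbcC ⊢
  linear_combination (-((-1:ZMod c)^k')) * hbcC - ((-1:ZMod c)^k') * a * (p ⟨k'+1, by omega⟩ : ZMod c) * hwP + he

theorem chain_congruence_solutions (n : ℕ) (hn : 1 ≤ n) (p : Fin n → ℤ)
    (hp : ∀ i, 0 < p i) (w : Fin n → ℤ)
    (hw : ∀ j, w j = ((List.ofFn p).take (j : ℕ)).prod *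
        bracket ((List.ofFn p).drop ((j : ℕ) + 1)))
    (c : ℕ) (hc : (c : ℤ) = Finset.univ.gcd w) :
    {m : Fin n → ZMod c |
        ((chainE p).map (Int.cast : ℤ → ZMod c)).mulVec m = fun _ => 1}
      = Set.range (chainSol p c) ∧
    Nat.card {m : Fin n → ZMod c //
        ((chainE p).map (Int.cast : ℤ → ZMod c)).mulVec m = fun _ => 1} = c := by
  have hn' : 0 < n := hn
  have hdvd : ∀ j : Fin n, ((w j : ℤ) : ZMod c) = 0 := by
    intro j
    rw [ZMod.intCast_zmod_eq_zero_iff_dvd, hc]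
    exact Finset.gcd_dvd (Finset.mem_univ j)
  -- the last row equation holds for chainSol
  have hlast : ∀ a : ZMod c,
      (p ⟨n-1, by omega⟩ : ZMod c) * chainSol p c a ⟨n-1, by omega⟩ = 1 := by
    intro a
    rcases Nat.lt_or_ge n 2 with h2 | h2
    · -- n = 1
      have hn1 : n = 1 := by omega
      subst hn1
      have hnil : (List.ofFn p).drop 1 = [] :=
        List.eq_nil_of_length_eq_zero (by simp)
      have h1 : w ⟨0, by omega⟩ = 1 := by
        rw [hw]
        simp only [Fin.val_mk, List.take_zero, List.prod_nil, one_mul, hnil, bracket_nil]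
      have h0 := hdvd ⟨0, by omega⟩
      rw [h1] at h0
      haveI : Subsingleton (ZMod c) :=
        subsingleton_of_zero_eq_one (by exact_mod_cast h0.symm)
      exact Subsingleton.elim _ _
    · obtain ⟨k', rfl⟩ : ∃ k', n = k' + 2 := ⟨n - 2, by omega⟩
      have hw0C : ((bracket ((List.ofFn p).drop 1) : ℤ) : ZMod c) = 0 := by
        have h0 := hdvd ⟨0, by omega⟩
        rw [hw] at h0
        simpa using h0
      have hwPC : ((((List.ofFn p).take (k'+1)).prod : ℤ) : ZMod c) = 0 := by
        have h0 := hdvd ⟨k'+1, by omega⟩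
        rw [hw] at h0
        simp only [Fin.val_mk] at h0
        rw [show List.drop (k'+1+1) (List.ofFn p) = [] from
              List.eq_nil_of_length_eq_zero (by simp), bracket_nil, mul_one] at h0
        exact_mod_cast h0
      exact chainSol_last_succ p c a k' rfl hw0C hwPC
  -- chainSol is always a solution
  have hsat : ∀ a : ZMod c,
      ((chainE p).map (Int.cast : ℤ → ZMod c)).mulVec (chainSol p c a) = fun _ => 1 := by
    intro a
    funext i
    rw [chainE_mulVec]
    by_cases hi : (i:ℕ) + 1 < n
    · rw [dif_pos hi]
      exact chainSol_row p c a i.val hi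
    · rw [dif_neg hi, add_zero]
      have hieq : i = ⟨n-1, by omega⟩ := Fin.ext (by have := i.isLt; simp; omega)
      rw [hieq]
      exact hlast a
  -- every solution is chainSol of its first coordinate
  have hsolve : ∀ m : Fin n → ZMod c,
      ((chainE p).map (Int.cast : ℤ → ZMod c)).mulVec m = (fun _ => 1) →
      m = chainSol p c (m ⟨0, hn'⟩) := by
    intro m h
    set a := m ⟨0, hn'⟩ with ha
    have H : ∀ k (hk : k < n), m ⟨k, hk⟩ = chainSol p c a ⟨k, hk⟩ := by
      intro k
      induction k with
      | zero =>
        intro hk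
        simp only [chainSol, Fin.val_mk, if_true]
        rfl
      | succ k ih =>
        intro hk
        have hrow := congrFun h ⟨k, by omega⟩
        rw [chainE_mulVec] at hrow
        rw [dif_pos (show ((⟨k, by omega⟩ : Fin n) : ℕ) + 1 < n from hk)] at hrow
        have h2 := chainSol_row p c a k hk
        rw [ih (by omega)] at hrow
        exact add_left_cancel (hrow.trans h2.symm)
    funext j
    exact H j.val j.isLt
  have hinj : Function.Injective (chainSol p c) := by
    intro a b hab
    have := congrFun hab ⟨0, hn'⟩
    simpa [chainSol] using this
  have hset : {m : Fin n → ZMod c |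
      ((chainE p).map (Int.cast : ℤ → ZMod c)).mulVec m = fun _ => 1}
      = Set.range (chainSol p c) := by
    ext m
    simp only [Set.mem_setOf_eq, Set.mem_range]
    constructor
    · intro h
      exact ⟨m ⟨0, hn'⟩, (hsolve m h).symm⟩
    · rintro ⟨a, rfl⟩
      exact hsat a
  refine ⟨hset, ?_⟩
  have e : {m : Fin n → ZMod c //
      ((chainE p).map (Int.cast : ℤ → ZMod c)).mulVec m = fun _ => 1}
      ≃ Set.range (chainSol p c) :=
    Equiv.subtypeEquivRight (fun m => Set.ext_iff.mp hset m)
  rw [Nat.card_congr e, Nat.card_range_of_injective hinj, Nat.card_zmod]
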